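/- Let D be a classical relative entropy (a divergence on pairs of finite probability vectors satisfying data processing under stochastic matrices, additivity under tensor products, and D((1,0)||(1/2,1/2)) = 1). Then for all probability vectors p, q of the same dimension, D_min(p||q) ≤ D(p||q) ≤ D_max(p||q), where D_max(p||q) = log_2 min{t ≥ 0 : t q_x ≥ p_x for all x} (and ∞ if no such t exists) and D_min(p||q) = -log_2 Σ_{x : p_x > 0} q_x. -/

import Mathlib

open scoped BigOperators

def IsProbVec {ι : Type} [Fintype ι] (p : ι → ℝ) : Prop :=
  (∀ i, 0 ≤ p i) ∧ ∑ i, p i = 1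

def IsStochastic {α β : Type} [Fintype α] [Fintype β] (E : Matrix α β ℝ) : Prop :=
  (∀ i j, 0 ≤ E i j) ∧ ∀ j, ∑ i, E i j = 1

def kron {m n : ℕ} (p : Fin m → ℝ) (q : Fin n → ℝ) : Fin (m * n) → ℝ :=
  fun i => p (finProdFinEquiv.symm i).1 * q (finProdFinEquiv.symm i).2


open Classical in
noncomputable def DmaxCl {n : ℕ} (p q : Fin n → ℝ) : EReal :=
  if ∃ t : ℝ, 0 ≤ t ∧ ∀ x, p x ≤ t * q x
  then ((Real.logb 2 (sInf {t : ℝ | 0 ≤ t ∧ ∀ x, p x ≤ t * q x}) : ℝ) : EReal)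
  else ⊤

open Classical in
noncomputable def DminCl {n : ℕ} (p q : Fin n → ℝ) : EReal :=
  ((-Real.logb 2 (∑ x ∈ Finset.univ.filter (fun x => 0 < p x), q x) : ℝ) : EReal)

noncomputable section StmtAux

def δ1 : Fin 1 → ℝ := fun _ => 1

def Bv (a : ℝ) : Fin 2 → ℝ := ![a, 1 - a]

lemma probVec_δ1 : IsProbVec δ1 := ⟨fun _ => zero_le_one, by simp [δ1]⟩

lemma probVec_Bv {a : ℝ} (h0 : 0 ≤ a) (h1 : a ≤ 1) : IsProbVec (Bv a) := by
  constructor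
  · intro i; fin_cases i <;> simp [Bv] <;> linarith
  · simp [Bv, Fin.sum_univ_two]

lemma Bv_one : Bv 1 = ![1, 0] := by funext i; fin_cases i <;> norm_num [Bv]

lemma Bv_half : Bv (1/2) = ![1/2, 1/2] := by funext i; fin_cases i <;> norm_num [Bv]

lemma probVec_10 : IsProbVec (![1, 0] : Fin 2 → ℝ) := Bv_one ▸ probVec_Bv zero_le_one le_rfl

lemma probVec_kron {m n : ℕ} {p : Fin m → ℝ} {q : Fin n → ℝ}
    (hp : IsProbVec p) (hq : IsProbVec q) : IsProbVec (kron p q) := by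
  constructor
  · intro i; exact mul_nonneg (hp.1 _) (hq.1 _)
  · rw [← Equiv.sum_comp finProdFinEquiv (kron p q)]
    simp only [kron, Equiv.symm_apply_apply]
    rw [Fintype.sum_prod_type, ← Finset.sum_mul_sum]
    rw [hp.2, hq.2, one_mul]

section D

variable (D : ∀ n : ℕ, (Fin n → ℝ) → (Fin n → ℝ) → EReal)
variable (hDPI : ∀ (n m : ℕ) (p q : Fin n → ℝ) (E : Matrix (Fin m) (Fin n) ℝ),
      IsProbVec p → IsProbVec q → IsStochastic E →
      D m (E.mulVec p) (E.mulVec q) ≤ D n p q)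
variable (hAdd : ∀ (n m : ℕ) (p q : Fin n → ℝ) (p' q' : Fin m → ℝ),
      IsProbVec p → IsProbVec q → IsProbVec p' → IsProbVec q' →
      D (n * m) (kron p p') (kron q q') = D n p q + D m p' q')
variable (hNorm : D 2 ![1, 0] ![1/2, 1/2] = 1)

include hAdd hNorm in
lemma Dpoint : D 1 δ1 δ1 = 0 := by
  have hk1 : kron (![1,0] : Fin 2 → ℝ) δ1 = (![1,0] : Fin 2 → ℝ) := by
    funext i
    have h1 : ((finProdFinEquiv.symm i).1 : Fin 2) = ⟨i.val, i.isLt⟩ := by revert i; decide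
    simp [kron, δ1, h1]
  have hk2 : kron (![1/2,1/2] : Fin 2 → ℝ) δ1 = (![1/2,1/2] : Fin 2 → ℝ) := by
    funext i
    have h1 : ((finProdFinEquiv.symm i).1 : Fin 2) = ⟨i.val, i.isLt⟩ := by revert i; decide
    simp [kron, δ1, h1]
  have h := hAdd 2 1 ![1,0] ![1/2,1/2] δ1 δ1 probVec_10
    (Bv_half ▸ probVec_Bv (by norm_num) (by norm_num)) probVec_δ1 probVec_δ1
  rw [hk1, hk2, hNorm] at h
  have h' : (1 : EReal) = 1 + D 1 δ1 δ1 := h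
  obtain (hb | ⟨r, hr⟩ | ht) : D 1 δ1 δ1 = ⊥ ∨ (∃ r : ℝ, D 1 δ1 δ1 = (r : EReal)) ∨ D 1 δ1 δ1 = ⊤ := by
    induction D 1 δ1 δ1 using EReal.rec with
    | bot => exact Or.inl rfl
    | coe r => exact Or.inr (Or.inl ⟨r, rfl⟩)
    | top => exact Or.inr (Or.inr rfl)
  · rw [hb, EReal.add_bot] at h'
    exact absurd h' (by rw [← EReal.coe_one]; exact EReal.coe_ne_bot 1)
  · rw [hr] at h' ⊢; norm_cast at h' ⊢; linarith
  · rw [ht, EReal.add_top_of_ne_bot (by rw [← EReal.coe_one]; exact EReal.coe_ne_bot 1)] at h'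
    exact absurd h' (by rw [← EReal.coe_one]; exact EReal.coe_ne_top 1)


lemma kron4 (u v : Fin 2 → ℝ) :
    kron u v = ![u 0 * v 0, u 0 * v 1, u 1 * v 0, u 1 * v 1] := by
  funext k; fin_cases k <;> rfl

lemma kron_Bv (a b : ℝ) :
    kron (Bv a) (Bv b) = ![a * b, a * (1-b), (1-a) * b, (1-a) * (1-b)] := by
  rw [kron4]; rfl

lemma kron_10 : kron (![1,0] : Fin 2 → ℝ) (![1,0] : Fin 2 → ℝ) = ![1, 0, 0, 0] := by
  rw [kron4]; norm_num

include hDPI hAdd hNorm in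
lemma Dnonneg (n : ℕ) (p q : Fin n → ℝ) (hp : IsProbVec p) (hq : IsProbVec q) :
    0 ≤ D n p q := by
  have hE : IsStochastic (Matrix.of fun (_ : Fin 1) (_ : Fin n) => (1:ℝ)) :=
    ⟨fun _ _ => zero_le_one, fun j => by simp⟩
  have h := hDPI n 1 p q _ hp hq hE
  have h1 : (Matrix.of fun (_ : Fin 1) (_ : Fin n) => (1:ℝ)).mulVec p = δ1 := by
    funext i
    simp [Matrix.mulVec, dotProduct, δ1, hp.2]
  have h2 : (Matrix.of fun (_ : Fin 1) (_ : Fin n) => (1:ℝ)).mulVec q = δ1 := by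
    funext i
    simp [Matrix.mulVec, dotProduct, δ1, hq.2]
  rw [h1, h2, Dpoint D hAdd hNorm] at h
  exact h

include hDPI hAdd hNorm in
lemma Dself_nonpos (n : ℕ) (v : Fin n → ℝ) (hv : IsProbVec v) :
    D n v v ≤ 0 := by
  have hE : IsStochastic (Matrix.of fun (i : Fin n) (_ : Fin 1) => v i) :=
    ⟨fun i _ => hv.1 i, fun j => hv.2⟩
  have h := hDPI 1 n δ1 δ1 _ probVec_δ1 probVec_δ1 hE
  have h1 : (Matrix.of fun (i : Fin n) (_ : Fin 1) => v i).mulVec δ1 = v := by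
    funext i
    simp [Matrix.mulVec, dotProduct, δ1]
  rw [h1, Dpoint D hAdd hNorm] at h
  exact h

include hDPI in
lemma Dmono {a b : ℝ} (h0 : 0 ≤ a) (hab : a ≤ b) (hb1 : b ≤ 1) :
    D 2 ![1,0] (Bv b) ≤ D 2 ![1,0] (Bv a) := by
  rcases eq_or_lt_of_le (hab.trans hb1) with h1 | h1
  · obtain rfl : a = b := le_antisymm hab (hb1.trans h1.ge)
    exact le_rfl
  · set c : ℝ := (b - a) / (1 - a) with hc
    have hden : (0:ℝ) < 1 - a := by linarith
    have hc0 : 0 ≤ c := div_nonneg (by linarith) hden.le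
    have hc1 : c ≤ 1 := by
      rw [hc, div_le_one hden]; linarith
    set E : Matrix (Fin 2) (Fin 2) ℝ := Matrix.of ![![1, c], ![0, 1-c]] with hE
    have hEs : IsStochastic E := by
      constructor
      · intro i j; fin_cases i <;> fin_cases j <;> simp [hE] <;> linarith
      · intro j; fin_cases j <;> simp [hE, Fin.sum_univ_two]
    have h1' : E.mulVec ![1,0] = ![1,0] := by
      funext i; fin_cases i <;> simp [hE, Matrix.mulVec, dotProduct, Fin.sum_univ_two]
    have h2' : E.mulVec (Bv a) = Bv b := by
      funext i
      fin_cases i <;>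
        simp [hE, Matrix.mulVec, dotProduct, Fin.sum_univ_two, Bv, hc] <;>
        field_simp <;> ring
    have h := hDPI 2 2 ![1,0] (Bv a) E probVec_10 (probVec_Bv h0 (hab.trans hb1)) hEs
    rwa [h1', h2'] at h

include hDPI hAdd in
lemma Dsub {a b : ℝ} (ha0 : 0 ≤ a) (ha1 : a ≤ 1) (hb0 : 0 ≤ b) (hb1 : b ≤ 1) :
    D 2 ![1,0] (Bv (a*b)) ≤ D 2 ![1,0] (Bv a) + D 2 ![1,0] (Bv b) := by
  set E : Matrix (Fin 2) (Fin (2*2)) ℝ :=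
    Matrix.of fun i j => if i = 0 then (if j = 0 then 1 else 0) else (if j = 0 then 0 else 1)
      with hE
  have hEs : IsStochastic E := by
    constructor
    · intro i j; fin_cases i <;> fin_cases j <;> simp [hE]
    · intro j; fin_cases j <;> simp [hE, Fin.sum_univ_two]
  have h1' : E.mulVec (kron ![1,0] ![1,0]) = ![1,0] := by
    rw [kron_10]
    funext i
    fin_cases i <;>
      simp [hE, Matrix.mulVec, dotProduct, Fin.sum_univ_four]
  have h2' : E.mulVec (kron (Bv a) (Bv b)) = Bv (a*b) := by
    rw [kron_Bv]
    funext i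
    fin_cases i <;>
      simp [hE, Matrix.mulVec, dotProduct, Fin.sum_univ_four, Bv] <;> ring
  have h := hDPI (2*2) 2 (kron ![1,0] ![1,0]) (kron (Bv a) (Bv b)) E
    (probVec_kron probVec_10 probVec_10)
    (probVec_kron (probVec_Bv ha0 ha1) (probVec_Bv hb0 hb1)) hEs
  rw [h1', h2'] at h
  rw [hAdd 2 2 ![1,0] (Bv a) ![1,0] (Bv b) probVec_10 (probVec_Bv ha0 ha1) probVec_10
    (probVec_Bv hb0 hb1)] at h
  exact h

include hDPI hAdd in
lemma Dsuper {a b : ℝ} (ha0 : 0 ≤ a) (ha1 : a ≤ 1) (hb0 : 0 ≤ b) (hb1 : b ≤ 1)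
    (hab : a * b < 1) :
    D 2 ![1,0] (Bv a) + D 2 ![1,0] (Bv b) ≤ D 2 ![1,0] (Bv (a*b)) := by
  have hden : (0:ℝ) < 1 - a*b := by linarith
  set w : Fin (2*2) → ℝ := ![a * b, a * (1-b), (1-a) * b, (1-a) * (1-b)] with hw
  set E : Matrix (Fin (2*2)) (Fin 2) ℝ :=
    Matrix.of fun j i => if i = 0 then (if j = 0 then (1:ℝ) else 0)
      else (if j = 0 then 0 else w j / (1 - a*b)) with hE
  have hwnn : ∀ j, 0 ≤ w j := by
    intro j; fin_cases j <;> simp [hw] <;> nlinarith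
  have hEs : IsStochastic E := by
    constructor
    · intro i j
      fin_cases j
      · fin_cases i <;> simp [hE]
      · fin_cases i <;> simp [hE] <;>
          exact div_nonneg (hwnn _) hden.le
    · intro j
      fin_cases j
      · simp [hE, Fin.sum_univ_four]
      · simp [hE, Fin.sum_univ_four, hw]
        field_simp
        ring
  have h1' : E.mulVec ![1,0] = kron ![1,0] ![1,0] := by
    rw [kron_10]
    funext j
    fin_cases j <;> simp [hE, Matrix.mulVec, dotProduct, Fin.sum_univ_two]
  have h2' : E.mulVec (Bv (a*b)) = kron (Bv a) (Bv b) := by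
    rw [kron_Bv]
    funext j
    fin_cases j <;>
      simp [hE, Matrix.mulVec, dotProduct, Fin.sum_univ_two, Bv, hw] <;>
      field_simp <;> ring
  have h := hDPI 2 (2*2) ![1,0] (Bv (a*b)) E probVec_10
    (probVec_Bv (mul_nonneg ha0 hb0) hab.le) hEs
  rw [h1', h2'] at h
  rw [hAdd 2 2 ![1,0] (Bv a) ![1,0] (Bv b) probVec_10 (probVec_Bv ha0 ha1) probVec_10
    (probVec_Bv hb0 hb1)] at h
  exact h


lemma nsmul_coe (m : ℕ) (r : ℝ) : m • ((r : ℝ) : EReal) = (((m : ℝ) * r : ℝ) : EReal) := by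
  induction m with
  | zero => simp
  | succ k ih =>
      rw [succ_nsmul, ih, ← EReal.coe_add, EReal.coe_eq_coe_iff]
      push_cast
      ring

include hDPI hAdd hNorm in
lemma Dpow_le {a : ℝ} (ha0 : 0 ≤ a) (ha1 : a ≤ 1) (m : ℕ) :
    D 2 ![1,0] (Bv (a^m)) ≤ m • D 2 ![1,0] (Bv a) := by
  induction m with
  | zero =>
      rw [zero_nsmul, pow_zero, Bv_one]
      exact Dself_nonpos D hDPI hAdd hNorm 2 ![1,0] probVec_10
  | succ k ih =>
      rw [pow_succ, succ_nsmul]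
      calc D 2 ![1,0] (Bv (a^k * a)) ≤ D 2 ![1,0] (Bv (a^k)) + D 2 ![1,0] (Bv a) :=
            Dsub D hDPI hAdd (pow_nonneg ha0 k) (pow_le_one₀ ha0 ha1) ha0 ha1
        _ ≤ k • D 2 ![1,0] (Bv a) + D 2 ![1,0] (Bv a) := add_le_add_left ih _

include hDPI hAdd hNorm in
lemma Dpow_ge {a : ℝ} (ha0 : 0 ≤ a) (ha1 : a < 1) (m : ℕ) :
    m • D 2 ![1,0] (Bv a) ≤ D 2 ![1,0] (Bv (a^m)) := by
  induction m with
  | zero =>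
      rw [zero_nsmul, pow_zero]
      exact Dnonneg D hDPI hAdd hNorm 2 ![1,0] (Bv 1) probVec_10 (probVec_Bv zero_le_one le_rfl)
  | succ k ih =>
      rw [pow_succ, succ_nsmul]
      have hlt : a^k * a < 1 := by
        rcases ha0.eq_or_lt with h | h
        · rw [← h]; norm_num
        · calc a^k * a ≤ 1 * a := by
                have := pow_le_one₀ ha0 ha1.le (n := k); nlinarith
            _ < 1 := by rw [one_mul]; exact ha1
      calc k • D 2 ![1,0] (Bv a) + D 2 ![1,0] (Bv a)
          ≤ D 2 ![1,0] (Bv (a^k)) + D 2 ![1,0] (Bv a) := add_le_add_left ih _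
        _ ≤ D 2 ![1,0] (Bv (a^k * a)) :=
            Dsuper D hDPI hAdd (pow_nonneg ha0 k) (pow_le_one₀ ha0 ha1.le) ha0 ha1.le hlt

include hDPI hAdd hNorm in
lemma Dhalf : D 2 ![1,0] (Bv (1/2)) = 1 := by rw [Bv_half]; exact hNorm

include hDPI hAdd hNorm in
lemma Dd_le (k : ℕ) : D 2 ![1,0] (Bv ((1/2 : ℝ)^k)) ≤ (((k : ℝ) : EReal)) := by
  have h := Dpow_le D hDPI hAdd hNorm (a := 1/2) (by norm_num) (by norm_num) k
  rw [Dhalf D hDPI hAdd hNorm] at h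
  calc D 2 ![1,0] (Bv ((1/2 : ℝ)^k)) ≤ k • (1 : EReal) := h
    _ = (((k : ℝ) : EReal)) := by
        rw [← EReal.coe_one, nsmul_coe]; norm_num

include hDPI hAdd hNorm in
lemma Dd_ge (k : ℕ) : (((k : ℝ) : EReal)) ≤ D 2 ![1,0] (Bv ((1/2 : ℝ)^k)) := by
  have h := Dpow_ge D hDPI hAdd hNorm (a := 1/2) (by norm_num) (by norm_num) k
  rw [Dhalf D hDPI hAdd hNorm] at h
  calc (((k : ℝ) : EReal)) = k • (1 : EReal) := by
        rw [← EReal.coe_one, nsmul_coe]; norm_num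
    _ ≤ _ := h

lemma pow_as_rpow {l : ℝ} (hl : 0 < l) (m : ℕ) :
    l ^ m = (2 : ℝ) ^ ((m : ℝ) * Real.logb 2 l) := by
  have h2 : (2:ℝ) ^ Real.logb 2 l = l := Real.rpow_logb (by norm_num) (by norm_num) hl
  calc l ^ m = ((2:ℝ) ^ Real.logb 2 l) ^ m := by rw [h2]
    _ = (2:ℝ) ^ (Real.logb 2 l * (m:ℝ)) := by
        rw [← Real.rpow_natCast ((2:ℝ) ^ Real.logb 2 l) m, ← Real.rpow_mul (by norm_num)]
    _ = _ := by rw [mul_comm]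

lemma half_pow_as_rpow (k : ℕ) : ((1/2 : ℝ)) ^ k = (2 : ℝ) ^ (-(k : ℝ)) := by
  have : (1/2 : ℝ) = (2 : ℝ) ^ (-1 : ℝ) := by
    rw [Real.rpow_neg_one]; norm_num
  rw [this, ← Real.rpow_natCast ((2:ℝ) ^ (-1:ℝ)) k, ← Real.rpow_mul (by norm_num)]
  ring_nf

include hDPI hAdd hNorm in
lemma Dbin_le {l : ℝ} (hl0 : 0 < l) (hl1 : l ≤ 1) :
    D 2 ![1,0] (Bv l) ≤ ((-Real.logb 2 l : ℝ) : EReal) := by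
  set c : ℝ := -Real.logb 2 l with hc
  have hc0 : 0 ≤ c := by
    rw [hc, neg_nonneg]
    exact Real.logb_nonpos (by norm_num) hl0.le hl1
  rcases eq_or_lt_of_le hl1 with h1 | h1
  · subst h1
    rw [Bv_one]
    calc D 2 ![1,0] ![1,0] ≤ 0 := Dself_nonpos D hDPI hAdd hNorm 2 ![1,0] probVec_10
      _ ≤ _ := by
          rw [← EReal.coe_zero, EReal.coe_le_coe_iff]; exact hc0
  · -- key estimate for every m ≥ 1
    have key : ∀ m : ℕ, 1 ≤ m →
        m • D 2 ![1,0] (Bv l) ≤ (((m : ℝ) * c + 1 : ℝ) : EReal) := by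
      intro m _
      set k : ℕ := ⌈(m : ℝ) * c⌉₊ with hk
      have hpow : (1/2 : ℝ)^k ≤ l^m := by
        rw [half_pow_as_rpow, pow_as_rpow hl0]
        apply Real.rpow_le_rpow_left_iff (by norm_num : (1:ℝ) < 2) |>.2
        have : (m : ℝ) * c ≤ (k : ℝ) := Nat.le_ceil _
        rw [hc] at this
        linarith
      have hklem : ((k : ℝ)) ≤ (m : ℝ) * c + 1 := by
        have := Nat.ceil_lt_add_one (mul_nonneg (Nat.cast_nonneg m) hc0)
        rw [← hk] at this
        linarith
      calc m • D 2 ![1,0] (Bv l) ≤ D 2 ![1,0] (Bv (l^m)) :=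
            Dpow_ge D hDPI hAdd hNorm hl0.le h1 m
        _ ≤ D 2 ![1,0] (Bv ((1/2 : ℝ)^k)) :=
            Dmono D hDPI (by positivity) hpow (pow_le_one₀ hl0.le hl1)
        _ ≤ (((k : ℝ) : EReal)) := Dd_le D hDPI hAdd hNorm k
        _ ≤ _ := by rw [EReal.coe_le_coe_iff]; exact hklem
    have hne_top : D 2 ![1,0] (Bv l) ≠ ⊤ := by
      intro htop
      have := key 1 le_rfl
      rw [htop, one_nsmul] at this
      exact absurd (top_le_iff.1 this) (EReal.coe_ne_top _)
    obtain (hb | ⟨x, hx⟩ | ht) : D 2 ![1,0] (Bv l) = ⊥ ∨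
        (∃ r : ℝ, D 2 ![1,0] (Bv l) = (r : EReal)) ∨ D 2 ![1,0] (Bv l) = ⊤ := by
      induction D 2 ![1,0] (Bv l) using EReal.rec with
      | bot => exact Or.inl rfl
      | coe r => exact Or.inr (Or.inl ⟨r, rfl⟩)
      | top => exact Or.inr (Or.inr rfl)
    · rw [hb]; exact bot_le
    · rw [hx]
      rw [EReal.coe_le_coe_iff]
      by_contra hcx
      push_neg at hcx
      obtain ⟨m, hm⟩ := exists_nat_gt (1 / (x - c))
      have hm1 : 1 ≤ m := by
        by_contra hm0
        push_neg at hm0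
        interval_cases m
        · have : (0:ℝ) < 1 / (x - c) := div_pos one_pos (by linarith)
          norm_num at hm
          linarith
      have := key m hm1
      rw [hx, nsmul_coe, EReal.coe_le_coe_iff] at this
      have hmx : 1 < (m:ℝ) * (x - c) := by
        rw [div_lt_iff₀ (by linarith)] at hm
        linarith
      nlinarith
    · exact absurd ht hne_top

include hDPI hAdd hNorm in
lemma Dbin_ge {l : ℝ} (hl0 : 0 < l) (hl1 : l ≤ 1) :
    ((-Real.logb 2 l : ℝ) : EReal) ≤ D 2 ![1,0] (Bv l) := by
  set c : ℝ := -Real.logb 2 l with hc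
  have hc0 : 0 ≤ c := by
    rw [hc, neg_nonneg]
    exact Real.logb_nonpos (by norm_num) hl0.le hl1
  rcases eq_or_lt_of_le hl1 with h1 | h1
  · subst h1
    have : c = 0 := by rw [hc, Real.logb_one, neg_zero]
    rw [this, EReal.coe_zero]
    exact Dnonneg D hDPI hAdd hNorm 2 ![1,0] (Bv 1) probVec_10 (probVec_Bv zero_le_one le_rfl)
  · have key : ∀ m : ℕ,
        (((m : ℝ) * c - 1 : ℝ) : EReal) ≤ m • D 2 ![1,0] (Bv l) := by
      intro m
      set k : ℕ := ⌊(m : ℝ) * c⌋₊ with hk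
      have hpow : l^m ≤ (1/2 : ℝ)^k := by
        rw [half_pow_as_rpow, pow_as_rpow hl0]
        apply Real.rpow_le_rpow_left_iff (by norm_num : (1:ℝ) < 2) |>.2
        have : ((k : ℝ)) ≤ (m : ℝ) * c := Nat.floor_le (mul_nonneg (Nat.cast_nonneg m) hc0)
        rw [hc] at this
        linarith
      have hklem : (m : ℝ) * c - 1 ≤ (k : ℝ) := (Nat.sub_one_lt_floor _).le
      calc (((m : ℝ) * c - 1 : ℝ) : EReal) ≤ (((k : ℝ)) : EReal) := by
            rw [EReal.coe_le_coe_iff]; exact hklem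
        _ ≤ D 2 ![1,0] (Bv ((1/2 : ℝ)^k)) := Dd_ge D hDPI hAdd hNorm k
        _ ≤ D 2 ![1,0] (Bv (l^m)) :=
            Dmono D hDPI (by positivity) hpow (by norm_num [pow_le_one₀])
        _ ≤ m • D 2 ![1,0] (Bv l) := Dpow_le D hDPI hAdd hNorm hl0.le hl1 m
    obtain (hb | ⟨x, hx⟩ | ht) : D 2 ![1,0] (Bv l) = ⊥ ∨
        (∃ r : ℝ, D 2 ![1,0] (Bv l) = (r : EReal)) ∨ D 2 ![1,0] (Bv l) = ⊤ := by
      induction D 2 ![1,0] (Bv l) using EReal.rec with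
      | bot => exact Or.inl rfl
      | coe r => exact Or.inr (Or.inl ⟨r, rfl⟩)
      | top => exact Or.inr (Or.inr rfl)
    · exfalso
      have := key 1
      rw [hb, one_nsmul] at this
      exact absurd this (EReal.bot_lt_coe _).not_ge
    · rw [hx]
      rw [EReal.coe_le_coe_iff]
      by_contra hcx
      push_neg at hcx
      obtain ⟨m, hm⟩ := exists_nat_gt (1 / (c - x))
      have := key m
      rw [hx, nsmul_coe, EReal.coe_le_coe_iff] at this
      have hm0 : (0:ℝ) < 1 / (c - x) := div_pos one_pos (by linarith)
      have hmx : 1 < (m:ℝ) * (c - x) := by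
        rw [div_lt_iff₀ (by linarith)] at hm
        linarith
      nlinarith
    · rw [ht]; exact le_top


include hDPI hAdd hNorm in
lemma Dlower (n : ℕ) (p q : Fin n → ℝ) (hp : IsProbVec p) (hq : IsProbVec q) :
    DminCl p q ≤ D n p q := by
  classical
  set Q : ℝ := ∑ x ∈ Finset.univ.filter (fun x => 0 < p x), q x with hQ
  have hQ0 : 0 ≤ Q := Finset.sum_nonneg fun x _ => hq.1 x
  have hQ1 : Q ≤ 1 := by
    rw [hQ, ← hq.2]
    exact Finset.sum_le_sum_of_subset_of_nonneg (Finset.filter_subset _ _)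
      (fun x _ _ => hq.1 x)
  have hmin : DminCl p q = ((-Real.logb 2 Q : ℝ) : EReal) := rfl
  rcases hQ0.eq_or_lt with h0 | h0
  · rw [hmin, ← h0, Real.logb_zero, neg_zero, EReal.coe_zero]
    exact Dnonneg D hDPI hAdd hNorm n p q hp hq
  · -- merge map
    set M : Matrix (Fin 2) (Fin n) ℝ :=
      Matrix.of fun i j => if 0 < p j then (if i = 0 then 1 else 0)
        else (if i = 0 then 0 else 1) with hM
    have hMs : IsStochastic M := by
      constructor
      · intro i j
        by_cases hpj : 0 < p j <;> fin_cases i <;> simp [hM, hpj]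
      · intro j
        by_cases hpj : 0 < p j <;> simp [hM, hpj, Fin.sum_univ_two]
    have hzero : ∀ j, ¬ 0 < p j → p j = 0 := fun j hj => le_antisymm (not_lt.1 hj) (hp.1 j)
    have hMp : M.mulVec p = ![1, 0] := by
      funext i
      fin_cases i
      · show ∑ j, M 0 j * p j = 1
        rw [← hp.2]
        apply Finset.sum_congr rfl
        intro j _
        by_cases hpj : 0 < p j
        · simp [hM, hpj]
        · simp [hM, hpj, hzero j hpj]
      · show ∑ j, M 1 j * p j = 0
        apply Finset.sum_eq_zero
        intro j _
        by_cases hpj : 0 < p j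
        · simp [hM, hpj]
        · simp [hM, hpj, hzero j hpj]
    have hMq : M.mulVec q = Bv Q := by
      funext i
      have hQ' : ∑ j, (if 0 < p j then q j else 0) = Q := by
        rw [hQ, Finset.sum_filter]
      fin_cases i
      · show ∑ j, M 0 j * q j = Bv Q 0
        have : ∀ j, M 0 j * q j = (if 0 < p j then q j else 0) := by
          intro j; by_cases hpj : 0 < p j <;> simp [hM, hpj]
        rw [Finset.sum_congr rfl fun j _ => this j, hQ']
        rfl
      · show ∑ j, M 1 j * q j = Bv Q 1
        have : ∀ j, M 1 j * q j = q j - (if 0 < p j then q j else 0) := by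
          intro j; by_cases hpj : 0 < p j <;> simp [hM, hpj]
        rw [Finset.sum_congr rfl fun j _ => this j, Finset.sum_sub_distrib, hq.2, hQ']
        rfl
    have h := hDPI n 2 p q M hp hq hMs
    rw [hMp, hMq] at h
    rw [hmin]
    exact le_trans (Dbin_ge D hDPI hAdd hNorm h0 hQ1) h

include hDPI hAdd hNorm in
lemma Dupper (n : ℕ) (p q : Fin n → ℝ) (hp : IsProbVec p) (hq : IsProbVec q) :
    D n p q ≤ DmaxCl p q := by
  classical
  by_cases hex : ∃ t : ℝ, 0 ≤ t ∧ ∀ x, p x ≤ t * q x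
  · rw [DmaxCl, if_pos hex]
    set S : Set ℝ := {t : ℝ | 0 ≤ t ∧ ∀ x, p x ≤ t * q x} with hS
    set t0 : ℝ := sInf S with ht0
    have hne : S.Nonempty := hex
    have hbd : BddBelow S := ⟨0, fun t ht => ht.1⟩
    have ht0mem : t0 ∈ S := by
      constructor
      · exact le_csInf hne fun t ht => ht.1
      · intro x
        rcases (hq.1 x).eq_or_lt with hqx | hqx
        · obtain ⟨t, ht, htx⟩ := hex
          have := htx x
          rw [← hqx] at this ⊢
          simpa using this
        · have hle : p x / q x ≤ t0 :=
            le_csInf hne fun t ht => (div_le_iff₀ hqx).2 (ht.2 x)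
          calc p x = (p x / q x) * q x := by field_simp
            _ ≤ t0 * q x := by nlinarith
    have ht01 : 1 ≤ t0 := by
      have : (1:ℝ) = ∑ x, p x := hp.2.symm
      have hle : ∑ x, p x ≤ ∑ x, t0 * q x := Finset.sum_le_sum fun x _ => ht0mem.2 x
      rw [← Finset.mul_sum, hq.2, mul_one] at hle
      linarith
    rcases eq_or_lt_of_le ht01 with ht1 | ht1
    · -- t0 = 1 : p = q
      have hpq : p = q := by
        have hle : ∀ x, p x ≤ q x := by
          intro x
          have := ht0mem.2 x
          rw [← ht1, one_mul] at this
          exact this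
        funext x
        by_contra hne'
        have hlt : p x < q x := lt_of_le_of_ne (hle x) hne'
        have : ∑ y, p y < ∑ y, q y :=
          Finset.sum_lt_sum (fun y _ => hle y) ⟨x, Finset.mem_univ x, hlt⟩
        rw [hp.2, hq.2] at this
        exact lt_irrefl _ this
      rw [hpq, ← ht1, Real.logb_one, EReal.coe_zero]
      exact Dself_nonpos D hDPI hAdd hNorm n q hq
    · -- t0 > 1
      have ht0pos : 0 < t0 := by linarith
      set r : Fin n → ℝ := fun x => (t0 * q x - p x) / (t0 - 1) with hr
      have hrnn : ∀ x, 0 ≤ r x := by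
        intro x
        apply div_nonneg _ (by linarith)
        have := ht0mem.2 x
        linarith
      have hrsum : ∑ x, r x = 1 := by
        rw [hr]
        rw [← Finset.sum_div]
        rw [Finset.sum_sub_distrib, ← Finset.mul_sum, hp.2, hq.2, mul_one]
        exact div_self (by linarith)
      have hrpv : IsProbVec r := ⟨hrnn, hrsum⟩
      set E : Matrix (Fin n) (Fin 2) ℝ :=
        Matrix.of fun x i => if i = 0 then p x else r x with hE
      have hEs : IsStochastic E := by
        constructor
        · intro i j
          fin_cases j <;> simp [hE] <;> [exact hp.1 i; exact hrnn i]
        · intro j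
          fin_cases j <;> simp [hE, hp.2, hrsum]
      have hE1 : E.mulVec ![1,0] = p := by
        funext x
        simp [hE, Matrix.mulVec, dotProduct, Fin.sum_univ_two]
      have hE2 : E.mulVec (Bv t0⁻¹) = q := by
        funext x
        simp only [hE, Matrix.mulVec, dotProduct, Fin.sum_univ_two, Bv,
          Matrix.of_apply, Matrix.cons_val_zero, Matrix.cons_val_one, Matrix.head_cons]
        norm_num
        rw [hr]
        have h10 : t0 ≠ 0 := by linarith
        have h11 : t0 - 1 ≠ 0 := by linarith
        field_simp
        ring
      have hinv0 : 0 < t0⁻¹ := by positivity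
      have hinv1 : t0⁻¹ ≤ 1 := by
        rw [inv_le_one_iff₀]; right; linarith
      have h := hDPI 2 n ![1,0] (Bv t0⁻¹) E probVec_10 (probVec_Bv hinv0.le hinv1) hEs
      rw [hE1, hE2] at h
      have h2 := Dbin_le D hDPI hAdd hNorm hinv0 hinv1
      have hlog : -Real.logb 2 t0⁻¹ = Real.logb 2 t0 := by
        rw [Real.logb_inv]; ring
      rw [hlog] at h2
      exact le_trans h h2
  · rw [DmaxCl, if_neg hex]
    exact le_top

end D
end StmtAux

/-- Any classical relative entropy lies between `D_min` and `D_max`. -/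
theorem stmt1
    (D : ∀ n : ℕ, (Fin n → ℝ) → (Fin n → ℝ) → EReal)
    (hDPI : ∀ (n m : ℕ) (p q : Fin n → ℝ) (E : Matrix (Fin m) (Fin n) ℝ),
      IsProbVec p → IsProbVec q → IsStochastic E →
      D m (E.mulVec p) (E.mulVec q) ≤ D n p q)
    (hAdd : ∀ (n m : ℕ) (p q : Fin n → ℝ) (p' q' : Fin m → ℝ),
      IsProbVec p → IsProbVec q → IsProbVec p' → IsProbVec q' →
      D (n * m) (kron p p') (kron q q') = D n p q + D m p' q')
    (hNorm : D 2 ![1, 0] ![1/2, 1/2] = 1) :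
    ∀ (n : ℕ) (p q : Fin n → ℝ), IsProbVec p → IsProbVec q →
      DminCl p q ≤ D n p q ∧ D n p q ≤ DmaxCl p q := by
  intro n p q hp hq
  exact ⟨Dlower D hDPI hAdd hNorm n p q hp hq, Dupper D hDPI hAdd hNorm n p q hp hq⟩
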